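/- arXiv:1109.3316 — 6 statements merged into one kernel-verified Lean document; each statement's English description precedes it below -/
import Mathlib

section
/- Let 0 < α < π/2 and let a ≤ b be reals. Let γ : ℝ → ℂ be continuously differentiable on [a,b] and suppose that for every t ∈ [a,b] we have γ(t) ≠ 0 and ⟪deriv γ t, −γ(t)⟫ ≥ cos(α)·‖deriv γ t‖·‖γ(t)‖ (the angle restriction with respect to the origin). Then ∫_{a}^{b} ‖deriv γ t‖ dt ≤ (1/cos α)·(‖γ(a)‖ − ‖γ(b)‖). -/
open Set MeasureTheory intervalIntegral

private lemma norm_hasDerivAt {γ : ℝ → ℂ} {v : ℂ} {t : ℝ} (h : HasDerivAt γ v t)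
    (hne : γ t ≠ 0) :
    HasDerivAt (fun s => ‖γ s‖) ((inner ℝ (γ t) v : ℝ) / ‖γ t‖) t := by
  have h1 : HasDerivAt (fun s => ‖γ s‖ ^ 2) (2 * (inner ℝ (γ t) v : ℝ)) t := h.norm_sq
  have h2 := h1.sqrt (pow_ne_zero 2 (norm_ne_zero_iff.mpr hne))
  have hderiv : 2 * (inner ℝ (γ t) v : ℝ) / (2 * Real.sqrt (‖γ t‖ ^ 2))
      = (inner ℝ (γ t) v : ℝ) / ‖γ t‖ := by
    rw [Real.sqrt_sq (norm_nonneg _)]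
    ring
  rw [hderiv] at h2
  convert h2 using 2 with s
  rw [Real.sqrt_sq (norm_nonneg _)]

/-- shallowness half of Property 4: if a continuously differentiable
curve on `[a,b]` satisfies the angle restriction
`⟪deriv γ t, −γ(t)⟫ ≥ cos(α)·‖deriv γ t‖·‖γ(t)‖` with respect to the origin,
then its length is at most `sec(α)·(‖γ(a)‖ − ‖γ(b)‖)`. -/
theorem angle_restricted_length_le (α : ℝ) (hα0 : 0 < α) (hα : α < Real.pi / 2)
    (a b : ℝ) (hab : a ≤ b) (γ : ℝ → ℂ)
    (hγ : ContDiffOn ℝ 1 γ (Set.Icc a b))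
    (hne : ∀ t ∈ Set.Icc a b, γ t ≠ 0)
    (hangle : ∀ t ∈ Set.Icc a b,
      ((starRingEnd ℂ) (deriv γ t) * (-(γ t))).re ≥
        Real.cos α * ‖deriv γ t‖ * ‖γ t‖) :
    (∫ t in a..b, ‖deriv γ t‖) ≤ (1 / Real.cos α) * (‖γ a‖ - ‖γ b‖) := by
  rcases eq_or_lt_of_le hab with rfl | hab'
  · simp
  have hcos : 0 < Real.cos α := Real.cos_pos_of_mem_Ioo
    ⟨by linarith [Real.pi_pos], hα⟩
  have hU : UniqueDiffOn ℝ (Icc a b) := uniqueDiffOn_Icc hab'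
  set φ : ℝ → ℂ := derivWithin γ (Icc a b) with hφdef
  have hφc : ContinuousOn φ (Icc a b) :=
    hγ.continuousOn_derivWithin hU le_rfl
  have hγc : ContinuousOn γ (Icc a b) := hγ.continuousOn
  -- at interior points γ has derivative φ t, and deriv γ t = φ t
  have hD : ∀ t ∈ Ioo a b, HasDerivAt γ (φ t) t := by
    intro t ht
    have h1 : DifferentiableWithinAt ℝ γ (Icc a b) t :=
      (hγ.differentiableOn one_ne_zero) t (Ioo_subset_Icc_self ht)
    exact h1.hasDerivWithinAt.hasDerivAt (Icc_mem_nhds ht.1 ht.2)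
  have hDeq : ∀ t ∈ Ioo a b, deriv γ t = φ t := fun t ht => (hD t ht).deriv
  -- the function g = ‖γ‖ and its derivative h on Ioo
  set h : ℝ → ℝ := fun t => (inner ℝ (γ t) (φ t) : ℝ) / ‖γ t‖ with hhdef
  have hgD : ∀ t ∈ Ioo a b, HasDerivAt (fun s => ‖γ s‖) (h t) t := fun t ht =>
    norm_hasDerivAt (hD t ht) (hne t (Ioo_subset_Icc_self ht))
  have hhc : ContinuousOn h (Icc a b) := by
    apply ContinuousOn.div
    · exact (continuous_inner.comp_continuousOn (hγc.prodMk hφc))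
    · exact hγc.norm
    · intro t ht
      exact norm_ne_zero_iff.mpr (hne t ht)
  have hhint : IntervalIntegrable h volume a b :=
    hhc.intervalIntegrable_of_Icc hab
  -- FTC
  have hFTC : (∫ t in a..b, h t) = ‖γ b‖ - ‖γ a‖ := by
    apply integral_eq_sub_of_hasDeriv_right_of_le hab hγc.norm
    · intro t ht
      exact (hgD t ht).hasDerivWithinAt
    · exact hhint
  -- pointwise inequality on Ioo: cos α * ‖φ t‖ ≤ - h t
  have hkey : ∀ t ∈ Ioo a b, Real.cos α * ‖φ t‖ ≤ - h t := by
    intro t ht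
    have htI := Ioo_subset_Icc_self ht
    have hA := hangle t htI
    rw [hDeq t ht] at hA
    have hγpos : 0 < ‖γ t‖ := norm_pos_iff.mpr (hne t htI)
    have hip : ((starRingEnd ℂ) (φ t) * (-(γ t))).re = -(inner ℝ (γ t) (φ t) : ℝ) := by
      have h1 : (inner ℝ (φ t) (γ t) : ℝ) = ((starRingEnd ℂ) (φ t) * γ t).re := by
        rw [Complex.inner, mul_comm]
      rw [mul_neg, Complex.neg_re, ← h1, real_inner_comm]
    rw [hip, ge_iff_le, le_neg] at hA
    show Real.cos α * ‖φ t‖ ≤ -((inner ℝ (γ t) (φ t) : ℝ) / ‖γ t‖)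
    rw [le_neg, div_le_iff₀ hγpos]
    linarith [hA]
  -- integrability of ‖φ‖
  have hφint : IntervalIntegrable (fun t => ‖φ t‖) volume a b :=
    hφc.norm.intervalIntegrable_of_Icc hab
  -- a.e. equality of integrands
  have hae : ∀ᵐ t ∂(volume : Measure ℝ), t ∈ uIoc a b → ‖deriv γ t‖ = ‖φ t‖ := by
    filter_upwards [compl_mem_ae_iff.mpr (Real.volume_singleton (a := b))] with t htb htI
    rw [uIoc_of_le hab] at htI
    have : t ∈ Ioo a b := ⟨htI.1, lt_of_le_of_ne htI.2 htb⟩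
    rw [hDeq t this]
  have hIeq : (∫ t in a..b, ‖deriv γ t‖) = ∫ t in a..b, ‖φ t‖ :=
    integral_congr_ae hae
  -- a.e. inequality for the mono step
  have hmono : (∫ t in a..b, Real.cos α * ‖φ t‖) ≤ ∫ t in a..b, - h t := by
    apply integral_mono_ae_restrict hab (hφint.const_mul _) hhint.neg
    apply (ae_restrict_iff' measurableSet_Icc).mpr
    filter_upwards [compl_mem_ae_iff.mpr (Real.volume_singleton (a := a)),
      compl_mem_ae_iff.mpr (Real.volume_singleton (a := b))] with t hta htb htI
    show Real.cos α * ‖φ t‖ ≤ -h t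
    exact hkey t ⟨lt_of_le_of_ne htI.1 (Ne.symm hta), lt_of_le_of_ne htI.2 htb⟩
  rw [intervalIntegral.integral_const_mul, intervalIntegral.integral_neg, hFTC] at hmono
  rw [hIeq, div_mul_eq_mul_div, le_div_iff₀ hcos, mul_comm]
  linarith
end

section
/- Let 0 < α < π/2, let R₁, R₂ > 0 and φ₁, φ₂ ∈ ℝ, and let γ₁, γ₂ : ℝ → ℂ be the right logarithmic spirals γⱼ(t) = Rⱼ·e^{−t}·exp(i·(φⱼ + tan(α)·t)) for j = 1, 2. If the ranges of γ₁ and γ₂ have a common point, then the ranges of γ₁ and γ₂ are equal. In other words, two right spirals (for the same angle α) either coincide as curves or are disjoint. -/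
/-- two right logarithmic spirals (for the same restricting angle `α`)
either coincide as curves or are disjoint: if their ranges share a point, the
ranges are equal. -/
theorem right_spirals_coincide_or_disjoint (α : ℝ) (hα0 : 0 < α) (hα : α < Real.pi / 2)
    (R₁ R₂ φ₁ φ₂ : ℝ) (hR₁ : 0 < R₁) (hR₂ : 0 < R₂)
    (γ₁ γ₂ : ℝ → ℂ)
    (hγ₁ : ∀ t : ℝ, γ₁ t = (Complex.ofReal (R₁ * Real.exp (-t))) *
      Complex.exp (Complex.I * Complex.ofReal (φ₁ + Real.tan α * t)))
    (hγ₂ : ∀ t : ℝ, γ₂ t = (Complex.ofReal (R₂ * Real.exp (-t))) *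
      Complex.exp (Complex.I * Complex.ofReal (φ₂ + Real.tan α * t)))
    (h : (Set.range γ₁ ∩ Set.range γ₂).Nonempty) :
    Set.range γ₁ = Set.range γ₂ := by
  obtain ⟨z, ⟨s, hs⟩, ⟨u, hu⟩⟩ := h
  have key : ∀ (R φ t : ℝ), (Complex.ofReal (R * Real.exp (-t))) *
      Complex.exp (Complex.I * Complex.ofReal (φ + Real.tan α * t)) =
      (R : ℂ) * Complex.exp ((-t : ℂ) + Complex.I * ((φ : ℂ) + Real.tan α * t)) := by
    intro R φ t
    rw [Complex.exp_add]
    push_cast [Complex.ofReal_exp]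
    ring
  have shift : ∀ (R φ t τ : ℝ), (Complex.ofReal (R * Real.exp (-(t + τ)))) *
      Complex.exp (Complex.I * Complex.ofReal (φ + Real.tan α * (t + τ))) =
      ((Complex.ofReal (R * Real.exp (-t))) *
        Complex.exp (Complex.I * Complex.ofReal (φ + Real.tan α * t))) *
      Complex.exp ((-τ : ℂ) + Complex.I * ((Real.tan α : ℂ) * τ)) := by
    intro R φ t τ
    rw [key, key, mul_assoc, ← Complex.exp_add]
    congr 2
    push_cast
    ring
  have main : ∀ τ : ℝ, γ₁ (s + τ) = γ₂ (u + τ) := by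
    intro τ
    rw [hγ₁, hγ₂, shift, shift, ← hγ₁ s, ← hγ₂ u, hs, hu]
  ext x
  constructor
  · rintro ⟨t, rfl⟩
    refine ⟨u + (t - s), ?_⟩
    rw [← main (t - s)]
    ring_nf
  · rintro ⟨t, rfl⟩
    refine ⟨s + (t - u), ?_⟩
    rw [main (t - u)]
    ring_nf
end

section
/- Let 0 < α < π/2 and let x, y : ℝ → ℝ be functions that are differentiable at every point with deriv x t ≥ 0 and deriv y t ≥ 0 for all t. Define γ : ℝ → ℂ by γ(t) = e^{x(t)+y(t)}·exp(i·(y(t) − x(t))·tan α). Then for every t, ⟪deriv γ t, γ(t)⟫ ≥ cos(α)·‖deriv γ t‖·‖γ(t)‖; that is, the tangent of the image curve makes angle at most α with the outward radial direction, so reversing orientation, the image of any monotone (north-east directed) path under the transformation (x,y) ↦ (R, φ) = (e^{x+y}, (y−x)·tan α) satisfies the angle restriction with respect to the root at the origin. -/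
open Real Complex

lemma key_ineq (α a b : ℝ) (hα0 : 0 < α) (hα : α < Real.pi / 2) (ha : 0 ≤ a) (hb : 0 ≤ b) :
    Real.cos α * Real.sqrt ((a + b) ^ 2 + ((b - a) * Real.tan α) ^ 2) ≤ a + b := by
  have hcos : 0 < Real.cos α :=
    Real.cos_pos_of_mem_Ioo ⟨by linarith [Real.pi_pos], hα⟩
  have htan : Real.cos α * Real.tan α = Real.sin α := by
    rw [Real.tan_eq_sin_div_cos]; field_simp
  have h2 : (Real.cos α * Real.tan α) ^ 2 = (Real.sin α) ^ 2 := by rw [htan]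
  have hs := Real.sin_sq_add_cos_sq α
  have hT : (Real.cos α) ^ 2 * ((a + b) ^ 2 + ((b - a) * Real.tan α) ^ 2) ≤ (a + b) ^ 2 := by
    nlinarith [mul_nonneg ha hb, sq_nonneg (Real.sin α),
      mul_nonneg (mul_nonneg (sq_nonneg (Real.sin α)) ha) hb]
  have h3 := Real.sqrt_le_sqrt hT
  rw [Real.sqrt_sq (by linarith : (0:ℝ) ≤ a + b)] at h3
  calc Real.cos α * Real.sqrt ((a + b) ^ 2 + ((b - a) * Real.tan α) ^ 2)
      = Real.sqrt ((Real.cos α) ^ 2 * ((a + b) ^ 2 + ((b - a) * Real.tan α) ^ 2)) := by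
        rw [Real.sqrt_mul (sq_nonneg _), Real.sqrt_sq hcos.le]
    _ ≤ a + b := h3

/-- the transformation `(x,y) ↦ e^{x+y}·exp(i·(y−x)·tan α)` maps any
north-east monotone path to a curve whose tangent makes angle at most `α` with the
outward radial direction: `⟪deriv γ t, γ(t)⟫ ≥ cos(α)·‖deriv γ t‖·‖γ(t)‖`. -/
theorem rsa_transformation_angle (α : ℝ) (hα0 : 0 < α) (hα : α < Real.pi / 2)
    (x y : ℝ → ℝ)
    (hx : ∀ t : ℝ, DifferentiableAt ℝ x t) (hy : ∀ t : ℝ, DifferentiableAt ℝ y t)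
    (hx' : ∀ t : ℝ, 0 ≤ deriv x t) (hy' : ∀ t : ℝ, 0 ≤ deriv y t)
    (γ : ℝ → ℂ)
    (hγ : ∀ t : ℝ, γ t = (Complex.ofReal (Real.exp (x t + y t))) *
      Complex.exp (Complex.I * Complex.ofReal ((y t - x t) * Real.tan α))) :
    ∀ t : ℝ, ((starRingEnd ℂ) (deriv γ t) * γ t).re ≥
      Real.cos α * ‖deriv γ t‖ * ‖γ t‖ := by
  intro t
  set g : ℝ → ℂ := fun s => (Complex.ofReal (x s + y s)) +
    Complex.I * Complex.ofReal ((y s - x s) * Real.tan α) with hg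
  have hγexp : γ = fun s => Complex.exp (g s) := by
    funext s
    rw [hγ s, hg]
    simp only [Complex.exp_add, Complex.ofReal_exp]
  set a := deriv x t with hha
  set b := deriv y t with hhb
  set c : ℂ := (Complex.ofReal (a + b)) +
    Complex.I * Complex.ofReal ((b - a) * Real.tan α) with hc
  have hgd : HasDerivAt g c t := by
    have h1 : HasDerivAt (fun s => (Complex.ofReal (x s + y s))) ((a + b : ℝ) : ℂ) t :=
      (((hx t).hasDerivAt.add (hy t).hasDerivAt)).ofReal_comp
    have h2 : HasDerivAt (fun s => (Complex.ofReal ((y s - x s) * Real.tan α)))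
        (((b - a) * Real.tan α : ℝ) : ℂ) t :=
      (((hy t).hasDerivAt.sub (hx t).hasDerivAt).mul_const (Real.tan α)).ofReal_comp
    exact h1.add (h2.const_mul Complex.I)
  have hγd : HasDerivAt γ (Complex.exp (g t) * c) t := by
    rw [hγexp]; exact hgd.cexp
  have hderiv : deriv γ t = γ t * c := by
    rw [hγd.deriv, hγexp]
  have hre : ((starRingEnd ℂ) (deriv γ t) * γ t).re = (a + b) * ‖γ t‖ ^ 2 := by
    rw [hderiv, map_mul, mul_comm ((starRingEnd ℂ) (γ t)) ((starRingEnd ℂ) c),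
      mul_assoc, Complex.conj_mul', ← Complex.ofReal_pow]
    simp [hc, Complex.add_re, Complex.mul_re, -Complex.ofReal_tan, ← Complex.ofReal_pow]
  have hnc : ‖c‖ = Real.sqrt ((a + b) ^ 2 + ((b - a) * Real.tan α) ^ 2) := by
    rw [Complex.norm_def, Complex.normSq_apply]
    congr 1
    simp [hc, -Complex.ofReal_tan]
    ring
  have hnd : ‖deriv γ t‖ = ‖γ t‖ * ‖c‖ := by rw [hderiv, norm_mul]
  rw [hre, hnd, hnc]
  have hkey := key_ineq α a b hα0 hα (hx' t) (hy' t)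
  have hγnn : (0:ℝ) ≤ ‖γ t‖ := norm_nonneg _
  nlinarith [sq_nonneg ‖γ t‖, mul_le_mul_of_nonneg_right hkey (mul_nonneg hγnn hγnn)]
end

section
/- Let 0 < α < π/2. For p, q ∈ ℂ, say that q is angle-restricted reachable from p if there exists a continuously differentiable curve γ : ℝ → ℂ with γ(0) = p, γ(1) = q such that for every t ∈ [0,1], γ(t) ≠ 0 and ⟪deriv γ t, −γ(t)⟫ ≥ cos(α)·‖deriv γ t‖·‖γ(t)‖. Then this relation is transitive: if q is angle-restricted reachable from p and u is angle-restricted reachable from q, then u is angle-restricted reachable from p. -/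
/-- `q` is angle-restricted reachable from `p` (restricting angle `α`, root at the
origin): there is a continuously differentiable curve from `p` to `q` whose tangent
everywhere on `[0,1]` makes angle at most `α` with the direction toward the origin. -/
def AngleRestrictedReachable (α : ℝ) (p q : ℂ) : Prop :=
  ∃ γ : ℝ → ℂ, γ 0 = p ∧ γ 1 = q ∧ ContDiffOn ℝ 1 γ (Set.Icc 0 1) ∧
    ∀ t ∈ Set.Icc (0:ℝ) 1, γ t ≠ 0 ∧
      ((starRingEnd ℂ) (deriv γ t) * (-(γ t))).re ≥
        Real.cos α * ‖deriv γ t‖ * ‖γ t‖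

open Set Filter Topology

lemma arr_eng_mono : Monotone expNegInvGlue := by
  intro x y hxy
  rcases le_or_gt x 0 with hx | hx
  · rw [expNegInvGlue.zero_of_nonpos hx]; exact expNegInvGlue.nonneg y
  · have hy : 0 < y := lt_of_lt_of_le hx hxy
    simp only [expNegInvGlue, if_neg (not_le.2 hx), if_neg (not_le.2 hy)]
    apply Real.exp_le_exp.2
    have := inv_anti₀ hx hxy
    linarith

lemma arr_st_mono : Monotone Real.smoothTransition := by
  intro x y hxy
  unfold Real.smoothTransition
  rw [div_le_div_iff₀ (Real.smoothTransition.pos_denom x) (Real.smoothTransition.pos_denom y)]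
  have h1 := arr_eng_mono hxy
  have h2 := arr_eng_mono (show 1 - y ≤ 1 - x by linarith)
  nlinarith [expNegInvGlue.nonneg x, expNegInvGlue.nonneg y,
    expNegInvGlue.nonneg (1 - x), expNegInvGlue.nonneg (1 - y)]

lemma arr_deriv_nonneg {f : ℝ → ℝ} {x : ℝ} (hm : Monotone f) (hd : DifferentiableAt ℝ f x) :
    0 ≤ deriv f x := by
  have H := hasDerivAt_iff_tendsto_slope.1 hd.hasDerivAt
  have H2 : Tendsto (slope f x) (𝓝[>] x) (𝓝 (deriv f x)) :=
    H.mono_left (nhdsWithin_mono _ fun y hy => ne_of_gt hy)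
  refine ge_of_tendsto H2 ?_
  filter_upwards [self_mem_nhdsWithin] with y hy
  rw [slope_def_field]
  exact div_nonneg (by linarith [hm (le_of_lt hy)]) (by linarith [hy.out])

lemma arr_deriv_zero_left {f : ℝ → ℝ} {x : ℝ} (hd : DifferentiableAt ℝ f x)
    (h : ∀ y < x, f y = f x) : deriv f x = 0 := by
  have H := hasDerivAt_iff_tendsto_slope.1 hd.hasDerivAt
  have H2 : Tendsto (slope f x) (𝓝[<] x) (𝓝 (deriv f x)) :=
    H.mono_left (nhdsWithin_mono _ fun y hy => ne_of_lt hy)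
  have H3 : Tendsto (slope f x) (𝓝[<] x) (𝓝 0) := by
    refine Tendsto.congr' ?_ tendsto_const_nhds
    filter_upwards [self_mem_nhdsWithin] with y hy
    rw [slope_def_field, h y hy, sub_self, zero_div]
  exact tendsto_nhds_unique H2 H3

lemma arr_deriv_zero_right {f : ℝ → ℝ} {x : ℝ} (hd : DifferentiableAt ℝ f x)
    (h : ∀ y, x < y → f y = f x) : deriv f x = 0 := by
  have H := hasDerivAt_iff_tendsto_slope.1 hd.hasDerivAt
  have H2 : Tendsto (slope f x) (𝓝[>] x) (𝓝 (deriv f x)) :=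
    H.mono_left (nhdsWithin_mono _ fun y hy => ne_of_gt hy)
  have H3 : Tendsto (slope f x) (𝓝[>] x) (𝓝 0) := by
    refine Tendsto.congr' ?_ tendsto_const_nhds
    filter_upwards [self_mem_nhdsWithin] with y hy
    rw [slope_def_field, h y hy, sub_self, zero_div]
  exact tendsto_nhds_unique H2 H3

lemma arr_scale (α c : ℝ) (hc : 0 ≤ c) (v z : ℂ)
    (h : ((starRingEnd ℂ) v * (-z)).re ≥ Real.cos α * ‖v‖ * ‖z‖) :
    ((starRingEnd ℂ) (c • v) * (-z)).re ≥ Real.cos α * ‖c • v‖ * ‖z‖ := by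
  have h1 : (starRingEnd ℂ) (c • v) = c • (starRingEnd ℂ) v := by
    simpa using star_smul c v
  rw [h1, smul_mul_assoc, Complex.real_smul, Complex.re_ofReal_mul, norm_smul,
    Real.norm_eq_abs, abs_of_nonneg hc]
  calc Real.cos α * (c * ‖v‖) * ‖z‖ = c * (Real.cos α * ‖v‖ * ‖z‖) := by ring
    _ ≤ c * ((starRingEnd ℂ) v * (-z)).re := by
        exact mul_le_mul_of_nonneg_left h hc

lemma arr_reparam (α : ℝ) (p q : ℂ) (h : AngleRestrictedReachable α p q) :
    ∃ δ : ℝ → ℂ, δ 0 = p ∧ δ 1 = q ∧ ContDiff ℝ 1 δ ∧ deriv δ 0 = 0 ∧ deriv δ 1 = 0 ∧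
      ∀ t ∈ Set.Icc (0:ℝ) 1, δ t ≠ 0 ∧
        ((starRingEnd ℂ) (deriv δ t) * (-(δ t))).re ≥
          Real.cos α * ‖deriv δ t‖ * ‖δ t‖ := by
  obtain ⟨γ, h0, h1, hC, hcond⟩ := h
  set ψ : ℝ → ℝ := fun x => Real.smoothTransition (3 * x - 1) with hψdef
  have hψC : ContDiff ℝ 1 ψ :=
    (Real.smoothTransition.contDiff (n := 1)).comp
      ((contDiff_const.mul contDiff_id).sub contDiff_const)
  have hψd : Differentiable ℝ ψ := hψC.differentiable one_ne_zero
  have hmem : ∀ x, ψ x ∈ Icc (0:ℝ) 1 := fun x =>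
    ⟨Real.smoothTransition.nonneg _, Real.smoothTransition.le_one _⟩
  have hψm : Monotone ψ :=
    arr_st_mono.comp (fun a b hab => by change 3*a-1 ≤ 3*b-1; linarith)
  have hψ0 : ∀ x ≤ (1/3:ℝ), ψ x = 0 := fun x hx =>
    Real.smoothTransition.zero_of_nonpos (by linarith)
  have hψ1 : ∀ x, (2/3:ℝ) ≤ x → ψ x = 1 := fun x hx =>
    Real.smoothTransition.one_of_one_le (by linarith)
  have hdψ0 : ∀ x ≤ (1/3:ℝ), deriv ψ x = 0 := fun x hx =>
    arr_deriv_zero_left (hψd x) (fun y hy => by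
      rw [hψ0 y (le_of_lt (lt_of_lt_of_le hy hx)), hψ0 x hx])
  have hdψ1 : ∀ x, (2/3:ℝ) ≤ x → deriv ψ x = 0 := fun x hx =>
    arr_deriv_zero_right (hψd x) (fun y hy => by
      rw [hψ1 y (le_of_lt (lt_of_le_of_lt hx hy)), hψ1 x hx])
  set Dγ : ℝ → ℂ := fun x => derivWithin γ (Icc 0 1) x with hDdef
  have hDcont : ContinuousOn Dγ (Icc 0 1) :=
    hC.continuousOn_derivWithin (uniqueDiffOn_Icc zero_lt_one) le_rfl
  set δ : ℝ → ℂ := fun x => γ (ψ x) with hδdef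
  set g : ℝ → ℂ := fun x => deriv ψ x • Dγ (ψ x) with hgdef
  have key : ∀ x, HasDerivAt δ (g x) x := by
    intro x
    have hw : HasDerivWithinAt γ (Dγ (ψ x)) (Icc 0 1) (ψ x) :=
      ((hC.differentiableOn one_ne_zero) (ψ x) (hmem x)).hasDerivWithinAt
    exact hw.scomp_hasDerivAt x (hψd x).hasDerivAt hmem
  have hderiv : deriv δ = g := funext fun x => (key x).deriv
  have hgcont : Continuous g := by
    refine Continuous.smul (hψC.continuous_deriv le_rfl) ?_
    exact hDcont.comp_continuous (hψC.continuous) hmem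
  have hδC : ContDiff ℝ 1 δ := by
    rw [contDiff_one_iff_deriv]
    exact ⟨fun x => (key x).differentiableAt, hderiv ▸ hgcont⟩
  refine ⟨δ, ?_, ?_, hδC, ?_, ?_, ?_⟩
  · show γ (ψ 0) = p; rw [hψ0 0 (by norm_num), h0]
  · show γ (ψ 1) = q; rw [hψ1 1 (by norm_num), h1]
  · rw [hderiv]; show deriv ψ 0 • Dγ (ψ 0) = 0
    rw [hdψ0 0 (by norm_num), zero_smul]
  · rw [hderiv]; show deriv ψ 1 • Dγ (ψ 1) = 0
    rw [hdψ1 1 (by norm_num), zero_smul]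
  · intro t _
    refine ⟨(hcond (ψ t) (hmem t)).1, ?_⟩
    rw [hderiv]
    show ((starRingEnd ℂ) (deriv ψ t • Dγ (ψ t)) * (-(γ (ψ t)))).re ≥
      Real.cos α * ‖deriv ψ t • Dγ (ψ t)‖ * ‖γ (ψ t)‖
    rcases le_or_gt t (1/3) with ht | ht
    · rw [hdψ0 t ht, zero_smul]; simp
    rcases le_or_gt (2/3) t with ht' | ht'
    · rw [hdψ1 t ht', zero_smul]; simp
    · have hψIoo : ψ t ∈ Ioo (0:ℝ) 1 :=
        ⟨Real.smoothTransition.pos_of_pos (by linarith),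
         Real.smoothTransition.lt_one_of_lt_one (by linarith)⟩
      have hDeq : Dγ (ψ t) = deriv γ (ψ t) :=
        derivWithin_of_mem_nhds (Icc_mem_nhds hψIoo.1 hψIoo.2)
      rw [hDeq]
      exact arr_scale α _ (arr_deriv_nonneg hψm (hψd t)) _ _ (hcond (ψ t) (hmem t)).2

/-- angle-restricted reachability is transitive (hence for all
`q ∈ R_p`, `R_q ⊆ R_p`). -/
theorem angleRestrictedReachable_trans (α : ℝ) (hα0 : 0 < α) (hα : α < Real.pi / 2)
    (p q u : ℂ) (hpq : AngleRestrictedReachable α p q)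
    (hqu : AngleRestrictedReachable α q u) :
    AngleRestrictedReachable α p u := by
  obtain ⟨δ₁, ha0, ha1, haC, had0, had1, hacond⟩ := arr_reparam α p q hpq
  obtain ⟨δ₂, hb0, hb1, hbC, hbd0, hbd1, hbcond⟩ := arr_reparam α q u hqu
  set η : ℝ → ℂ := fun t => if t ≤ (1/2:ℝ) then δ₁ (2*t) else δ₂ (2*t - 1) with hηdef
  set g : ℝ → ℂ := fun t =>
    if t ≤ (1/2:ℝ) then (2:ℝ) • deriv δ₁ (2*t) else (2:ℝ) • deriv δ₂ (2*t - 1) with hgdef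
  have hL : ∀ t : ℝ, HasDerivAt (fun s => δ₁ (2*s)) ((2:ℝ) • deriv δ₁ (2*t)) t := by
    intro t
    have h2 : HasDerivAt (fun s : ℝ => 2*s) 2 t := by
      simpa using (hasDerivAt_id t).const_mul (2:ℝ)
    exact ((haC.differentiable one_ne_zero) (2*t)).hasDerivAt.scomp t h2
  have hR : ∀ t : ℝ, HasDerivAt (fun s => δ₂ (2*s - 1)) ((2:ℝ) • deriv δ₂ (2*t - 1)) t := by
    intro t
    have h2 : HasDerivAt (fun s : ℝ => 2*s - 1) 2 t := by
      simpa using ((hasDerivAt_id t).const_mul (2:ℝ)).sub_const 1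
    exact ((hbC.differentiable one_ne_zero) (2*t - 1)).hasDerivAt.scomp t h2
  have key : ∀ t, HasDerivAt η (g t) t := by
    intro t
    rcases lt_trichotomy t (1/2:ℝ) with ht | ht | ht
    · have hg : g t = (2:ℝ) • deriv δ₁ (2*t) := if_pos ht.le
      rw [hg]
      refine (hL t).congr_of_eventuallyEq ?_
      filter_upwards [Iio_mem_nhds ht] with y hy
      exact if_pos (le_of_lt hy)
    · subst ht
      have e1 : (2:ℝ) * (1/2) = 1 := by norm_num
      have hg : g (1/2) = 0 := by
        rw [hgdef]; simp only [le_refl, if_pos, e1, had1, smul_zero]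
      rw [hg]
      have hleft : HasDerivWithinAt η 0 (Iic (1/2:ℝ)) (1/2) := by
        have := ((hL (1/2)).hasDerivWithinAt (s := Iic (1/2:ℝ)))
        rw [e1, had1, smul_zero] at this
        refine this.congr (fun y hy => if_pos hy) (if_pos le_rfl)
      have hright : HasDerivWithinAt η 0 (Ici (1/2:ℝ)) (1/2) := by
        have := ((hR (1/2)).hasDerivWithinAt (s := Ici (1/2:ℝ)))
        have e2 : (2:ℝ) * (1/2) - 1 = 0 := by norm_num
        rw [e2, hbd0, smul_zero] at this
        refine this.congr (fun y hy => ?_) ?_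
        · rcases eq_or_lt_of_le hy.out with hy' | hy'
          · rw [hηdef]; simp only [← hy', le_refl, if_pos, e1, e2, ha1, hb0]
            norm_num [hb0]
          · exact if_neg (not_le.2 hy')
        · show η (1/2) = δ₂ (2*(1/2) - 1)
          rw [hηdef]; simp only [le_refl, if_pos, e1, e2, ha1, hb0]
          norm_num [hb0]
      have := hleft.union hright
      rw [Iic_union_Ici] at this
      exact hasDerivWithinAt_univ.1 this
    · have hg : g t = (2:ℝ) • deriv δ₂ (2*t - 1) := if_neg (not_le.2 ht)
      rw [hg]
      refine (hR t).congr_of_eventuallyEq ?_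
      filter_upwards [Ioi_mem_nhds ht] with y hy
      exact if_neg (not_le.2 hy)
  have hηderiv : deriv η = g := funext fun x => (key x).deriv
  have hgcont : Continuous g := by
    refine Continuous.if_le ?_ ?_ continuous_id continuous_const ?_
    · exact ((continuous_const (y := (2:ℝ))).smul ((haC.continuous_deriv le_rfl).comp
        (continuous_const.mul continuous_id : Continuous fun t : ℝ => 2 * t)))
    · exact ((continuous_const (y := (2:ℝ))).smul ((hbC.continuous_deriv le_rfl).comp
        ((continuous_const.mul continuous_id).sub continuous_const : Continuous fun t : ℝ => 2 * t - 1)))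
    · intro x hx
      subst hx
      norm_num [had1, hbd0]
  have hηC : ContDiff ℝ 1 η := by
    rw [contDiff_one_iff_deriv]
    exact ⟨fun x => (key x).differentiableAt, hηderiv ▸ hgcont⟩
  refine ⟨η, ?_, ?_, hηC.contDiffOn, ?_⟩
  · show η 0 = p
    rw [hηdef]; simp only [if_pos (by norm_num : (0:ℝ) ≤ 1/2)]
    rw [mul_zero, ha0]
  · show η 1 = u
    rw [hηdef]; simp only [if_neg (by norm_num : ¬(1:ℝ) ≤ 1/2)]
    norm_num [hb1]
  · intro t ht
    rw [hηderiv]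
    rcases le_or_gt t (1/2:ℝ) with h2 | h2
    · have hmem : 2*t ∈ Icc (0:ℝ) 1 := ⟨by linarith [ht.1], by linarith⟩
      have hη : η t = δ₁ (2*t) := if_pos h2
      have hg : g t = (2:ℝ) • deriv δ₁ (2*t) := if_pos h2
      rw [hη, hg]
      exact ⟨(hacond _ hmem).1,
        arr_scale α 2 (by norm_num) _ _ (hacond _ hmem).2⟩
    · have hmem : 2*t - 1 ∈ Icc (0:ℝ) 1 := ⟨by linarith, by linarith [ht.2]⟩
      have hη : η t = δ₂ (2*t - 1) := if_neg (not_le.2 h2)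
      have hg : g t = (2:ℝ) • deriv δ₂ (2*t - 1) := if_neg (not_le.2 h2)
      rw [hη, hg]
      exact ⟨(hbcond _ hmem).1,
        arr_scale α 2 (by norm_num) _ _ (hbcond _ hmem).2⟩
end

section
/- Let 0 < α < π/2, let R₁, R₂ > 0 and φ₁ ≤ φ₂ be reals, and set Δ = φ₂ − φ₁, t = (Δ/tan α + log(R₁/R₂))/2 and s = (Δ/tan α − log(R₁/R₂))/2. Then the right spiral through (R₁, φ₁) and the left spiral through (R₂, φ₂) meet at these parameters: R₁·e^{−t}·exp(i·(φ₁ + tan(α)·t)) = R₂·e^{−s}·exp(i·(φ₂ − tan(α)·s)), and the common point has modulus R₁·e^{−t} = √(R₁·R₂)·e^{−Δ/(2·tan α)}. -/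
/-- the right spiral through `(R₁, φ₁)` and the left spiral through
`(R₂, φ₂)` meet at parameters `t = (Δ/tan α + log(R₁/R₂))/2` and
`s = (Δ/tan α − log(R₁/R₂))/2` (where `Δ = φ₂ − φ₁`), and the common point (the join
point) has modulus `√(R₁·R₂)·e^{−Δ/(2 tan α)}`. -/
theorem spiral_join_point (α R₁ R₂ φ₁ φ₂ : ℝ) (hα0 : 0 < α) (hα : α < Real.pi / 2)
    (hR₁ : 0 < R₁) (hR₂ : 0 < R₂) (hφ : φ₁ ≤ φ₂) :
    (Complex.ofReal (R₁ * Real.exp (-(((φ₂ - φ₁) / Real.tan α + Real.log (R₁ / R₂)) / 2))) *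
        Complex.exp (Complex.I * Complex.ofReal (φ₁ +
          Real.tan α * (((φ₂ - φ₁) / Real.tan α + Real.log (R₁ / R₂)) / 2))) =
      Complex.ofReal (R₂ * Real.exp (-(((φ₂ - φ₁) / Real.tan α - Real.log (R₁ / R₂)) / 2))) *
        Complex.exp (Complex.I * Complex.ofReal (φ₂ -
          Real.tan α * (((φ₂ - φ₁) / Real.tan α - Real.log (R₁ / R₂)) / 2)))) ∧
    R₁ * Real.exp (-(((φ₂ - φ₁) / Real.tan α + Real.log (R₁ / R₂)) / 2)) =
      Real.sqrt (R₁ * R₂) * Real.exp (-((φ₂ - φ₁) / (2 * Real.tan α))) := by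
  have hT : Real.tan α ≠ 0 :=
    ne_of_gt (Real.tan_pos_of_pos_of_lt_pi_div_two hα0 hα)
  have hL : Real.log (R₁ / R₂) = Real.log R₁ - Real.log R₂ := Real.log_div hR₁.ne' hR₂.ne'
  have hmod : R₁ * Real.exp (-(((φ₂ - φ₁) / Real.tan α + Real.log (R₁ / R₂)) / 2)) =
      R₂ * Real.exp (-(((φ₂ - φ₁) / Real.tan α - Real.log (R₁ / R₂)) / 2)) := by
    rw [hL]
    nth_rewrite 1 [← Real.exp_log hR₁]
    nth_rewrite 2 [← Real.exp_log hR₂]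
    rw [← Real.exp_add, ← Real.exp_add]
    ring_nf
  constructor
  · have harg : φ₁ + Real.tan α * (((φ₂ - φ₁) / Real.tan α + Real.log (R₁ / R₂)) / 2) =
        φ₂ - Real.tan α * (((φ₂ - φ₁) / Real.tan α - Real.log (R₁ / R₂)) / 2) := by
      field_simp
      ring
    rw [harg, hmod]
  · rw [hL]
    have hsq : Real.sqrt (R₁ * R₂) = Real.exp ((Real.log R₁ + Real.log R₂) / 2) := by
      rw [show (Real.log R₁ + Real.log R₂) / 2 = Real.log (R₁ * R₂) * (1/2) by
        rw [Real.log_mul hR₁.ne' hR₂.ne']; ring,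
        ← Real.rpow_def_of_pos (mul_pos hR₁ hR₂), Real.sqrt_eq_rpow]
    rw [hsq]
    nth_rewrite 1 [← Real.exp_log hR₁]
    rw [← Real.exp_add, ← Real.exp_add]
    congr 1
    field_simp
    ring
end

section
/- Let p₁, p₂ ∈ ℂ, set D = ‖p₁ − p₂‖ and R₂ = ‖p₂‖, and suppose R₂ > (3/2)·D. Then the angle between the vectors p₁ and p₂ (i.e., arccos(⟪p₁,p₂⟫/(‖p₁‖·‖p₂‖)) with the real inner product ⟪z,w⟫ = Re(conj(z)·w)) is at most 3·D/(√5·R₂). -/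
/-- if `D = ‖p₁ − p₂‖`, `R₂ = ‖p₂‖` and `R₂ > (3/2)·D`, then the angle
between the vectors `p₁` and `p₂` (with respect to the real inner product
`⟪z,w⟫ = Re(conj(z)·w)` on `ℂ`) is at most `3·D/(√5·R₂)`. -/
theorem angle_bound_shallow_light (p₁ p₂ : ℂ)
    (h : ‖p₂‖ > (3 / 2) * ‖p₁ - p₂‖) :
    Real.arccos ((((starRingEnd ℂ) p₁ * p₂).re) / (‖p₁‖ * ‖p₂‖)) ≤
      3 * ‖p₁ - p₂‖ / (Real.sqrt 5 * ‖p₂‖) := by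
  set d : ℝ := ‖p₁ - p₂‖ with hd
  set r : ℝ := ‖p₂‖ with hr
  set a : ℝ := ‖p₁‖ with ha
  set E : ℝ := ((starRingEnd ℂ) p₁ * p₂).re with hE
  have hd0 : 0 ≤ d := norm_nonneg _
  have hr0 : 0 < r := lt_of_le_of_lt (by linarith) h
  have sqrt5 : Real.sqrt 5 ^ 2 = 5 := Real.sq_sqrt (by norm_num)
  have sqrt5_pos : 0 < Real.sqrt 5 := Real.sqrt_pos.mpr (by norm_num)
  have sqrt5_ge : 2 ≤ Real.sqrt 5 := by nlinarith [Real.sqrt_nonneg 5]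
  have sqrt5_le : Real.sqrt 5 ≤ 3 := by nlinarith [Real.sqrt_nonneg 5]
  -- polarization identity
  have key : d ^ 2 = a ^ 2 + r ^ 2 - 2 * E := by
    have h1 : d ^ 2 = Complex.normSq (p₁ - p₂) := by
      rw [hd, ← Complex.sq_norm]
    have h2 : a ^ 2 = Complex.normSq p₁ := by
      rw [ha, ← Complex.sq_norm]
    have h3 : r ^ 2 = Complex.normSq p₂ := by
      rw [hr, ← Complex.sq_norm]
    rw [h1, h2, h3, hE]
    simp [Complex.normSq_apply, Complex.mul_re, Complex.sub_re, Complex.sub_im]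
    ring
  -- p₁ ≠ 0
  have ha0 : 0 < a := by
    rcases lt_or_eq_of_le (norm_nonneg p₁) with h0 | h0
    · exact h0
    · exfalso
      have hp : p₁ = 0 := norm_eq_zero.mp (by rw [← ha]; exact h0.symm)
      have hdr : d = r := by rw [hd, hr, hp, zero_sub, norm_neg]
      rw [hdr] at h; linarith
  set c : ℝ := E / (a * r) with hc
  -- sin² bound : 1 - c² ≤ (d/r)²
  have har : 0 < a * r := mul_pos ha0 hr0
  have hsin : 1 - c ^ 2 ≤ (d / r) ^ 2 := by
    rw [hc, div_pow, div_pow]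
    rw [sub_le_iff_le_add]
    have h4 : a ^ 2 * r ^ 2 - E ^ 2 ≤ d ^ 2 * a ^ 2 := by
      nlinarith [sq_nonneg (a ^ 2 + d ^ 2 - r ^ 2)]
    rw [div_add_div _ _ (by positivity : (r:ℝ)^2 ≠ 0) (by positivity : (a*r)^2 ≠ 0),
      le_div_iff₀ (by positivity)]
    nlinarith [sq_nonneg a, sq_nonneg r, mul_pos (mul_pos ha0 ha0) (mul_pos hr0 hr0)]
  -- c ≥ √5 / 3
  have hc2 : 5 / 9 ≤ c ^ 2 := by
    have hdr2 : (d / r) ^ 2 ≤ 4 / 9 := by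
      rw [div_pow, div_le_iff₀ (by positivity)]
      nlinarith
    linarith
  have hcpos : 0 < c := by
    rw [hc]
    apply div_pos _ har
    nlinarith
  have hclb : Real.sqrt 5 / 3 ≤ c := by
    have h5 : Real.sqrt 5 ≤ 3 * c := by
      have : Real.sqrt 5 ≤ Real.sqrt ((3 * c) ^ 2) := by
        apply Real.sqrt_le_sqrt; nlinarith
      rwa [Real.sqrt_sq (by positivity)] at this
    linarith
  -- the angle
  set θ : ℝ := Real.arccos c with hθ
  have hθ0 : 0 ≤ θ := Real.arccos_nonneg c
  have hθhalf : θ < Real.pi / 2 := Real.arccos_lt_pi_div_two.mpr hcpos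
  have hB : Real.sqrt (1 - c ^ 2) / c ≤ 3 * d / (Real.sqrt 5 * r) := by
    have h6 : Real.sqrt (1 - c ^ 2) ≤ d / r := by
      have : Real.sqrt (1 - c ^ 2) ≤ Real.sqrt ((d / r) ^ 2) :=
        Real.sqrt_le_sqrt hsin
      rwa [Real.sqrt_sq (by positivity)] at this
    calc Real.sqrt (1 - c ^ 2) / c ≤ (d / r) / (Real.sqrt 5 / 3) := by
          apply div_le_div₀ (by positivity) h6 (by positivity) hclb
      _ = 3 * d / (Real.sqrt 5 * r) := by
          field_simp
  rcases eq_or_lt_of_le hθ0 with hθz | hθz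
  · rw [← hθz]; positivity
  · have htan : θ ≤ Real.tan θ := le_of_lt (Real.lt_tan hθz hθhalf)
    have htanc : Real.tan θ = Real.sqrt (1 - c ^ 2) / c := Real.tan_arccos c
    calc θ ≤ Real.tan θ := htan
      _ = Real.sqrt (1 - c ^ 2) / c := htanc
      _ ≤ 3 * d / (Real.sqrt 5 * r) := hB
end
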